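/- Let κ be an infinite regular cardinal, let ⟨z_α : α < κ⁺⟩ be a sequence enumerating all of [κ⁺]^{<κ}, and let M = {γ ∈ S^{κ⁺}_κ : γ is approachable with respect to ⟨z_α : α < κ⁺⟩}. If S ⊆ S^{κ⁺}_κ is stationary in κ⁺ and S belongs to the approachability ideal I[κ⁺], then S \ M is non-stationary in κ⁺. In other words, M is a maximum element of I[κ⁺] ∩ P(S^{κ⁺}_κ) modulo the non-stationary ideal. -/

import Mathlib

open Set Cardinal

/-- `C` is a closed unbounded subset of the ordinal `δ`. -/
def IsClubIn (δ : Ordinal.{0}) (C : Set Ordinal.{0}) : Prop :=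
  C ⊆ Set.Iio δ ∧
  (∀ α < δ, ∃ β ∈ C, α < β) ∧
  (∀ α < δ, 0 < α → (∀ β < α, ∃ γ ∈ C, β < γ ∧ γ < α) → α ∈ C)

/-- `S` is stationary in `δ`: it meets every club subset of `δ`. -/
def IsStationaryIn (δ : Ordinal.{0}) (S : Set Ordinal.{0}) : Prop :=
  ∀ C, IsClubIn δ C → (S ∩ C).Nonempty

/-- `γ` is approachable with respect to the sequence `z`: there is a strictly increasing
sequence of length `cof γ`, cofinal in `γ`, all of whose proper initial segments appear
in `z` before `γ`. -/
def Approachable (z : Ordinal.{0} → Set Ordinal.{0}) (γ : Ordinal.{0}) : Prop :=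
  ∃ f : Ordinal.{0} → Ordinal.{0},
    (∀ ξ η, ξ < η → η < γ.cof.ord → f ξ < f η) ∧
    (∀ ξ < γ.cof.ord, f ξ < γ) ∧
    (∀ β < γ, ∃ ξ < γ.cof.ord, β ≤ f ξ) ∧
    (∀ ξ < γ.cof.ord, ∃ α < γ, z α = f '' Set.Iio ξ)

/-- The set `S^{κ⁺}_κ` of ordinals below `κ⁺` of cofinality `κ`. -/
def SCof (κ : Cardinal.{0}) : Set Ordinal.{0} :=
  {γ | γ < (Order.succ κ).ord ∧ γ.cof = κ}

/-- `X` belongs to the approachability ideal `I[κ⁺]`: there are a club `D ⊆ κ⁺` and a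
sequence `u` of subsets of `κ⁺` of cardinality `< κ` such that every `γ ∈ D ∩ X` is
approachable with respect to `u`. -/
def InAppIdeal (κ : Cardinal.{0}) (X : Set Ordinal.{0}) : Prop :=
  ∃ D : Set Ordinal.{0}, ∃ u : Ordinal.{0} → Set Ordinal.{0},
    IsClubIn (Order.succ κ).ord D ∧
    (∀ α < (Order.succ κ).ord,
      u α ⊆ Set.Iio (Order.succ κ).ord ∧ #(u α) < Cardinal.lift.{1} κ) ∧
    ∀ γ ∈ D ∩ X, Approachable u γ

theorem statement1 (κ : Cardinal.{0}) (hκ : ℵ₀ ≤ κ) (hreg : κ.IsRegular)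
    (z : Ordinal.{0} → Set Ordinal.{0})
    (hz : ∀ α < (Order.succ κ).ord,
      z α ⊆ Set.Iio (Order.succ κ).ord ∧ #(z α) < Cardinal.lift.{1} κ)
    (hsurj : ∀ x : Set Ordinal.{0}, x ⊆ Set.Iio (Order.succ κ).ord →
      #x < Cardinal.lift.{1} κ → ∃ α < (Order.succ κ).ord, z α = x)
    (S : Set Ordinal.{0}) (hSsub : S ⊆ SCof κ)
    (hSstat : IsStationaryIn (Order.succ κ).ord S)
    (hSI : InAppIdeal κ S) :
    ¬ IsStationaryIn (Order.succ κ).ord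
      (S \ {γ | γ ∈ SCof κ ∧ Approachable z γ}) := by
  
  intro hstat
  obtain ⟨D, u, hD, hu, happ⟩ := hSI
  set δ := (Order.succ κ).ord with hδdef
  have hreg' : (Order.succ κ).IsRegular := Cardinal.isRegular_succ hκ
  have hcof : δ.cof = Order.succ κ := hreg'.cof_eq
  have hlim : Order.IsSuccLimit δ := Cardinal.isSuccLimit_ord (hκ.trans (Order.le_succ κ))
  have hsucclt : ∀ a < δ, a + 1 < δ := by
    intro a ha; rw [Ordinal.add_one_eq_succ]; exact hlim.succ_lt ha
  -- translation function h : α ↦ index of u α in z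
  have hchoose : ∀ α, α < δ → ∃ α', α' < δ ∧ z α' = u α := by
    intro α hα
    obtain ⟨α', h1, h2⟩ := hsurj (u α) (hu α hα).1 (hu α hα).2
    exact ⟨α', h1, h2⟩
  choose! h hh1 hh2 using hchoose
  -- D-unboundedness choice function
  have hDchoose : ∀ α, α < δ → ∃ β, β ∈ D ∧ α < β := by
    intro α hα; obtain ⟨β, h1, h2⟩ := hD.2.1 α hα; exact ⟨β, h1, h2⟩
  choose! d hd1 hd2 using hDchoose
  -- closure set E
  set E : Set Ordinal.{0} := {γ | γ < δ ∧ ∀ α < γ, h α < γ} with hEdef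
  -- step function
  set g : Ordinal.{0} → Ordinal.{0} :=
    fun β => max (d β + 1) (Ordinal.bsup β (fun α _ => h α + 1)) with hgdef
  have hg1 : ∀ β < δ, g β < δ := by
    intro β hβ
    apply max_lt
    · exact hsucclt _ (hD.1 (hd1 β hβ))
    · apply Ordinal.bsup_lt_ord
      · rw [hcof]; exact Cardinal.lt_ord.mp hβ
      · intro α hα; exact hsucclt _ (hh1 α (hα.trans hβ))
  have hg2 : ∀ β < δ, β < g β := by
    intro β hβ
    calc β < d β := hd2 β hβ
    _ < d β + 1 := lt_add_one _
    _ ≤ g β := le_max_left _ _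
  have hg3 : ∀ β, ∀ α, ∀ hα : α < β, h α < g β := by
    intro β α hα
    calc h α < h α + 1 := lt_add_one _
    _ ≤ Ordinal.bsup β (fun α _ => h α + 1) := Ordinal.le_bsup _ α hα
    _ ≤ g β := le_max_right _ _
  have hgd : ∀ β < δ, d β < g β := by
    intro β hβ
    exact lt_of_lt_of_le (lt_add_one _) (le_max_left _ _)
  -- D ∩ E is club
  have hC : IsClubIn δ (D ∩ E) := by
    refine ⟨fun x hx => hD.1 hx.1, ?_, ?_⟩
    · -- unbounded
      intro α hα
      set e : ℕ → Ordinal.{0} := fun n => g^[n] (α + 1) with hedef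
      have he0 : e 0 = α + 1 := rfl
      have hes : ∀ n, e (n + 1) = g (e n) := by
        intro n; simp [hedef, Function.iterate_succ_apply']
      have heδ : ∀ n, e n < δ := by
        intro n; induction n with
        | zero => rw [he0]; exact hsucclt _ hα
        | succ n ih => rw [hes]; exact hg1 _ ih
      have hemono : ∀ n, e n < e (n + 1) := by
        intro n; rw [hes]; exact hg2 _ (heδ n)
      set c : Ordinal.{0} := ⨆ n, e n with hcdef
      have hcδ : c < δ := by
        apply Ordinal.iSup_lt_ord_lift _ heδ
        rw [hcof, Cardinal.mk_nat, Cardinal.lift_aleph0]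
        exact lt_of_le_of_lt hκ (Order.lt_succ _)
      have helt : ∀ n, e n < c := fun n => lt_of_lt_of_le (hemono n) (Ordinal.le_iSup e (n + 1))
      have hαc : α < c := lt_of_lt_of_le (lt_add_one α) (le_of_eq he0.symm |>.trans_lt (helt 0)).le
      have hcD : c ∈ D := by
        apply hD.2.2 c hcδ
        · exact lt_of_le_of_lt (zero_le (a := α)) hαc
        · intro β hβ
          obtain ⟨n, hn⟩ := Ordinal.lt_iSup_iff.mp hβ
          refine ⟨d (e n), hd1 _ (heδ n), lt_trans hn (hd2 _ (heδ n)), ?_⟩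
          calc d (e n) < g (e n) := hgd _ (heδ n)
          _ = e (n + 1) := (hes n).symm
          _ < c := helt (n + 1)
      have hcE : c ∈ E := by
        refine ⟨hcδ, ?_⟩
        intro α' hα'
        obtain ⟨n, hn⟩ := Ordinal.lt_iSup_iff.mp hα'
        calc h α' < g (e n) := hg3 _ _ hn
        _ = e (n + 1) := (hes n).symm
        _ < c := helt (n + 1)
      exact ⟨c, ⟨hcD, hcE⟩, hαc⟩
    · -- closed
      intro α hα h0 hcl
      constructor
      · apply hD.2.2 α hα h0
        intro β hβ
        obtain ⟨γ', ⟨hγD, _⟩, h1, h2⟩ := hcl β hβ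
        exact ⟨γ', hγD, h1, h2⟩
      · refine ⟨hα, ?_⟩
        intro α' hα'
        obtain ⟨γ', ⟨_, hγE⟩, h1, h2⟩ := hcl α' hα'
        exact lt_trans (hγE.2 α' h1) h2
  -- derive contradiction
  obtain ⟨γ, ⟨hγS, hγM⟩, hγD, hγE⟩ := hstat (D ∩ E) hC
  apply hγM
  have hγcof := hSsub hγS
  have hγδ : γ < δ := hγcof.1
  obtain ⟨f, hf1, hf2, hf3, hf4⟩ := happ γ ⟨hγD, hγS⟩
  refine ⟨hγcof, f, hf1, hf2, hf3, ?_⟩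
  intro ξ hξ
  obtain ⟨α, hαγ, hαz⟩ := hf4 ξ hξ
  exact ⟨h α, hγE.2 α hαγ, by rw [hh2 α (hαγ.trans hγδ), hαz]⟩
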